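/- If a finite impartial game G is nimber-like, then G is identical (as a game tree) to some nimber *n. -/

import Mathlib

/-- Finite impartial games, given by their (finite list of) options. -/
inductive IGame : Type where
  | mk : List IGame → IGame

/-- The empty game `E`, with no options. -/
abbrev E : IGame := .mk []

/-- The list of options of a game. -/
def IGame.opts : IGame → List IGame
  | .mk l => l

theorem IGame.sizeOf_lt_of_mem {g : IGame} {l : List IGame} (h : g ∈ l) :
    sizeOf g < sizeOf (IGame.mk l) := by
  have := List.sizeOf_lt_of_mem h
  simp only [IGame.mk.sizeOf_spec]; omega

/-- The pass operator: `E* = E`; for `G` with options, `G*` has options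
`G` together with `g*` for each option `g` of `G`. -/
def pass : IGame → IGame
  | .mk [] => .mk []
  | .mk l => .mk (.mk l :: l.attach.map fun g => pass g.1)
decreasing_by
  exact IGame.sizeOf_lt_of_mem g.2

/-- The split sum `G ∘ H`. -/
def split : IGame → IGame → IGame
  | .mk [], _ => .mk []
  | .mk gs, .mk [] => .mk gs
  | .mk gs, .mk hs =>
      .mk ((hs.attach.map fun h => split (.mk gs) h.1) ++
           (gs.attach.map fun g => split g.1 (.mk hs)))
termination_by G H => sizeOf G + sizeOf H
decreasing_by
  · have := IGame.sizeOf_lt_of_mem h.2; omega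
  · have := IGame.sizeOf_lt_of_mem g.2; omega

/-- Disjunctive sum of games. -/
def addG : IGame → IGame → IGame
  | .mk gs, .mk hs =>
      .mk ((gs.attach.map fun g => addG g.1 (.mk hs)) ++
           (hs.attach.map fun h => addG (.mk gs) h.1))
termination_by G H => sizeOf G + sizeOf H
decreasing_by
  · have := IGame.sizeOf_lt_of_mem g.2; omega
  · have := IGame.sizeOf_lt_of_mem h.2; omega

/-- The nimber `*n`, with options `*0, …, *(n-1)`. -/
def star : ℕ → IGame
  | n => .mk ((List.range n).attach.map fun k => star k.1)
termination_by n => n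
decreasing_by have := List.mem_range.mp k.2; omega

/-- `G` is a P-position (previous player wins under normal play):
every option is an N-position. -/
def PPos : IGame → Prop
  | .mk l => ∀ g ∈ l.attach, ¬ PPos g.1
decreasing_by exact IGame.sizeOf_lt_of_mem g.2

/-- Identity of game trees (extensionally: same set of options, recursively). -/
def Ident : IGame → IGame → Prop
  | .mk gs, .mk hs =>
      (∀ g ∈ gs.attach, ∃ h ∈ hs.attach, Ident g.1 h.1) ∧
      (∀ h ∈ hs.attach, ∃ g ∈ gs.attach, Ident g.1 h.1)
termination_by G H => sizeOf G + sizeOf H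
decreasing_by
  · have := IGame.sizeOf_lt_of_mem g.2
    have := IGame.sizeOf_lt_of_mem h.2; omega
  · have := IGame.sizeOf_lt_of_mem g.2
    have := IGame.sizeOf_lt_of_mem h.2; omega

/-- `G` has hereditary transitivity: every option of an option of `G` is an
option of `G`. -/
def HerTrans (G : IGame) : Prop :=
  ∀ g ∈ G.opts, ∀ g' ∈ g.opts, g' ∈ G.opts

/-- `G` is nimber-like: it has hereditary transitivity and (recursively) so do
all of its options and suboptions. -/
def NimberLike : IGame → Prop
  | .mk l => HerTrans (.mk l) ∧ ∀ g ∈ l.attach, NimberLike g.1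
decreasing_by exact IGame.sizeOf_lt_of_mem g.2

lemma Ident_iff (gs hs : List IGame) : Ident (.mk gs) (.mk hs) ↔
    (∀ g ∈ gs, ∃ h ∈ hs, Ident g h) ∧ (∀ h ∈ hs, ∃ g ∈ gs, Ident g h) := by
  rw [Ident]; simp

lemma NimberLike_iff (gs : List IGame) : NimberLike (.mk gs) ↔
    HerTrans (.mk gs) ∧ ∀ g ∈ gs, NimberLike g := by
  rw [NimberLike]; simp

lemma mem_star_aux {n : ℕ} {g : IGame} :
    g ∈ (List.range n).attach.map (fun k => _root_.star k.1) ↔ ∃ k < n, g = _root_.star k := by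
  simp [List.mem_map, eq_comm]

lemma exists_max (l : List ℕ) (h : l ≠ []) : ∃ a ∈ l, ∀ b ∈ l, b ≤ a := by
  induction l with
  | nil => exact absurd rfl h
  | cons x xs ih =>
    rcases xs with _ | ⟨y, ys⟩
    · exact ⟨x, by simp⟩
    · obtain ⟨a, ha, hmax⟩ := ih (by simp)
      rcases le_total x a with hx | hx
      · exact ⟨a, List.mem_cons_of_mem _ ha, by
          intro b hb; rcases List.mem_cons.mp hb with rfl | hb
          · exact hx
          · exact hmax b hb⟩
      · exact ⟨x, List.mem_cons_self, by
          intro b hb; rcases List.mem_cons.mp hb with rfl | hb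
          · exact le_rfl
          · exact (hmax b hb).trans hx⟩

theorem nimber_aux : ∀ G : IGame, NimberLike G → ∃ n : ℕ, Ident G (_root_.star n)
  | .mk gs => fun hNL => by
    rw [NimberLike_iff] at hNL
    obtain ⟨hHT, hsub⟩ := hNL
    have hv : ∀ g ∈ gs, ∃ n, Ident g (_root_.star n) := fun g hg => nimber_aux g (hsub g hg)
    have D : ∀ k, (∃ g ∈ gs, Ident g (_root_.star k)) → ∀ j < k, ∃ g' ∈ gs, Ident g' (_root_.star j) := by
      rintro k ⟨g, hg, hid⟩ j hj
      obtain ⟨l⟩ := g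
      rw [_root_.star, Ident_iff] at hid
      obtain ⟨_, h2⟩ := hid
      obtain ⟨g', hg', hid'⟩ := h2 (_root_.star j) (mem_star_aux.mpr ⟨j, hj, rfl⟩)
      exact ⟨g', hHT (.mk l) hg g' hg', hid'⟩
    rcases eq_or_ne gs [] with rfl | hgs
    · exact ⟨0, by rw [_root_.star, Ident_iff]; simp⟩
    · classical
      set v : IGame → ℕ := fun g =>
        if h : ∃ n, Ident g (_root_.star n) then h.choose else 0 with hvdef
      have hvspec : ∀ g ∈ gs, Ident g (_root_.star (v g)) := by
        intro g hg
        have h := hv g hg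
        simp only [hvdef, dif_pos h]
        exact h.choose_spec
      obtain ⟨a, ha, hmax⟩ := exists_max (gs.map v) (by simpa using hgs)
      obtain ⟨g0, hg0, hg0a⟩ := List.mem_map.mp ha
      have P : ∀ k ≤ a, ∃ g ∈ gs, Ident g (_root_.star k) := by
        intro k hk
        rcases eq_or_lt_of_le hk with rfl | hk
        · exact ⟨g0, hg0, hg0a ▸ hvspec g0 hg0⟩
        · exact D a ⟨g0, hg0, hg0a ▸ hvspec g0 hg0⟩ k hk
      refine ⟨a + 1, ?_⟩
      rw [_root_.star, Ident_iff]
      constructor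
      · intro g hg
        refine ⟨_root_.star (v g), mem_star_aux.mpr ⟨v g, ?_, rfl⟩, hvspec g hg⟩
        have := hmax (v g) (List.mem_map.mpr ⟨g, hg, rfl⟩)
        omega
      · intro h hh
        obtain ⟨k, hk, rfl⟩ := mem_star_aux.mp hh
        exact P k (by omega)
decreasing_by exact IGame.sizeOf_lt_of_mem hg

/-- every finite nimber-like game is (as a game tree) a nimber. -/
theorem nimberLike_is_nimber (G : IGame) (h : NimberLike G) :
    ∃ n : ℕ, Ident G (_root_.star n) :=
  nimber_aux G h
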